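/- For every integer m ≥ 0, Σ_{m'=0}^{m} C(m, m') · T(m, m')⁴ = 2^{4m} / 2^{m + ((−1)^m − 1)/2}, where T(m,m') := Σ_{w=0}^{m−m'} Σ_{w'=0}^{m'} C(m−m', w)·C(m', w')·(−1)^{w' + (w+w')(w+w'−1)/2}. Equivalently, the sum equals 2^{3m} when m is even and 2^{3m+1} when m is odd. -/

import Mathlib

open Finset

/-- `T(m,m')`, the trace of the diagonal phase unitary of the complete graph on `m` vertices
with `m'` additional single-vertex Z gates. -/
def Tval (m m' : ℕ) : ℤ :=
  ∑ w ∈ Finset.range (m - m' + 1), ∑ w' ∈ Finset.range (m' + 1),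
    (Nat.choose (m - m') w : ℤ) * (Nat.choose m' w' : ℤ)
      * (-1 : ℤ) ^ (w' + (w + w') * (w + w' - 1) / 2)

private def Ii : GaussianInt := ⟨0,1⟩

private lemma tri_step (n : ℕ) : (n+4)*((n+4)-1)/2 = n*(n-1)/2 + (4*n+6) := by
  have he : Even (n*(n-1)) := by
    rcases n with _ | k
    · simp
    · simpa [mul_comm] using (Nat.even_mul_succ_self k)
  have hmul : (n+4)*((n+4)-1) = n*(n-1) + (8*n+12) := by
    rcases n with _ | k
    · norm_num
    · simp only [Nat.succ_sub_one, Nat.add_sub_cancel]; ring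
  obtain ⟨c, hc⟩ := he
  omega

private lemma key (n : ℕ) :
    (1+Ii)*(-Ii)^n + (1-Ii)*Ii^n = 2*(-1:GaussianInt)^(n*(n-1)/2) := by
  induction n using Nat.strong_induction_on with
  | _ n ih =>
    match n with
    | 0 => decide
    | 1 => decide
    | 2 => decide
    | 3 => decide
    | (n+4) =>
      have h := ih n (by omega)
      rw [tri_step, pow_add (-1:GaussianInt), pow_add (-Ii) n 4, pow_add Ii n 4]
      have h1 : (-Ii)^4 = 1 := by decide
      have h2 : Ii^4 = 1 := by decide
      have h3 : (-1:GaussianInt)^(4*n+6) = 1 := by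
        refine Even.neg_one_pow ⟨2*n+3, by ring⟩
      rw [h1, h2, h3]
      simpa using h

private lemma binom (x : GaussianInt) (a : ℕ) :
    (1+x)^a = ∑ w ∈ range (a+1), (a.choose w : GaussianInt) * x^w := by
  rw [add_comm, add_pow]
  exact Finset.sum_congr rfl fun w _ => by ring

set_option maxRecDepth 100000 in
private lemma two_T (m m' : ℕ) :
    (2 : GaussianInt) * ((Tval m m' : ℤ) : GaussianInt)
      = (1+Ii)^(m'+1)*(1-Ii)^(m-m') + (1-Ii)^(m'+1)*(1+Ii)^(m-m') := by
  have hsub : (1-Ii) = 1 + (-Ii) := by ring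
  calc (2:GaussianInt) * ((Tval m m' : ℤ) : GaussianInt)
      = ∑ w ∈ range (m-m'+1), ∑ w' ∈ range (m'+1),
          ((1+Ii) * ((((m-m').choose w : GaussianInt)) * (-Ii)^w * (((m'.choose w' : ℕ) : GaussianInt) * Ii^w'))
           + (1-Ii) * ((((m-m').choose w : GaussianInt)) * Ii^w * (((m'.choose w' : ℕ) : GaussianInt) * (-Ii)^w'))) := by
        unfold Tval
        push_cast
        rw [Finset.mul_sum]
        refine Finset.sum_congr rfl fun w _ => ?_
        rw [Finset.mul_sum]
        refine Finset.sum_congr rfl fun w' _ => ?_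
        have hk := key (w + w')
        have h3 : (-1:GaussianInt)^w' * (-Ii)^w' = Ii^w' := by
          rw [← mul_pow, show ((-1:GaussianInt))*(-Ii) = Ii from by ring]
        have h4 : (-1:GaussianInt)^w' * Ii^w' = (-Ii)^w' := by
          rw [← mul_pow, show ((-1:GaussianInt))*Ii = -Ii from by ring]
        simp only [pow_add] at hk ⊢
        linear_combination (-(((m-m').choose w : GaussianInt) * (m'.choose w' : GaussianInt) * (-1:GaussianInt)^w')) * hk
          + ((1+Ii) * ((m-m').choose w : GaussianInt) * (m'.choose w' : GaussianInt) * (-Ii)^w) * h3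
          + ((1-Ii) * ((m-m').choose w : GaussianInt) * (m'.choose w' : GaussianInt) * Ii^w) * h4
    _ = (1+Ii) * ((∑ w ∈ range (m-m'+1), (((m-m').choose w : ℕ) : GaussianInt) * (-Ii)^w)
            * (∑ w' ∈ range (m'+1), ((m'.choose w' : ℕ) : GaussianInt) * Ii^w'))
        + (1-Ii) * ((∑ w ∈ range (m-m'+1), (((m-m').choose w : ℕ) : GaussianInt) * Ii^w)
            * (∑ w' ∈ range (m'+1), ((m'.choose w' : ℕ) : GaussianInt) * (-Ii)^w')) := by
        rw [Finset.sum_comm]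
        simp only [Finset.sum_mul_sum, Finset.mul_sum, Finset.sum_mul]
        rw [← Finset.sum_add_distrib]
        exact Finset.sum_congr rfl fun w' _ => Finset.sum_add_distrib
    _ = (1+Ii)^(m'+1)*(1-Ii)^(m-m') + (1-Ii)^(m'+1)*(1+Ii)^(m-m') := by
        rw [hsub, ← binom, ← binom, ← binom, ← binom]
        ring

private lemma four_Tsq (m m' : ℕ) (h : m' ≤ m) :
    (4 : GaussianInt) * ((Tval m m' : ℤ) : GaussianInt)^2
      = 2^(m+2) + 2^(m+1) * Ii^(m+1) * ((-1)^(m-m') + (-1)^(m'+1)) := by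
  have hz2 : (1+Ii)^2 = 2*Ii := by decide
  have hw2 : (1-Ii)^2 = -(2*Ii) := by decide
  have hzw : (1+Ii)*(1-Ii) = 2 := by decide
  have habm : (m - m') + (m' + 1) = m + 1 := by omega
  have h2m : (2:GaussianInt)^(m'+1) * 2^(m-m') = 2^(m+1) := by
    rw [← pow_add]; congr 1; omega
  have hIm : Ii^(m'+1) * Ii^(m-m') = Ii^(m+1) := by
    rw [← pow_add]; congr 1; omega
  calc (4 : GaussianInt) * ((Tval m m' : ℤ) : GaussianInt)^2
      = ((2:GaussianInt) * (Tval m m' : GaussianInt))^2 := by ring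
    _ = ((1+Ii)^(m'+1)*(1-Ii)^(m-m') + (1-Ii)^(m'+1)*(1+Ii)^(m-m'))^2 := by rw [two_T]
    _ = ((1+Ii)^2)^(m'+1) * ((1-Ii)^2)^(m-m') + ((1-Ii)^2)^(m'+1) * ((1+Ii)^2)^(m-m')
          + 2 * ((1+Ii)*(1-Ii))^(m'+1) * ((1+Ii)*(1-Ii))^(m-m') := by
        simp only [mul_pow, ← pow_mul, ← pow_mul']
        ring
    _ = (2*Ii)^(m'+1) * (-(2*Ii))^(m-m') + (-(2*Ii))^(m'+1) * (2*Ii)^(m-m')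
          + 2 * (2:GaussianInt)^(m'+1) * 2^(m-m') := by rw [hz2, hw2, hzw]
    _ = (2^(m'+1) * 2^(m-m')) * (Ii^(m'+1) * Ii^(m-m')) * ((-1)^(m-m') + (-1)^(m'+1))
          + 2 * (2^(m'+1) * 2^(m-m')) := by
        rw [neg_pow (2*Ii) (m-m'), neg_pow (2*Ii) (m'+1)]
        simp only [mul_pow]
        ring
    _ = 2^(m+2) + 2^(m+1) * Ii^(m+1) * ((-1)^(m-m') + (-1)^(m'+1)) := by
        rw [h2m, hIm]
        rw [show m+2 = (m+1)+1 from rfl, pow_succ]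
        ring

private lemma neg_one_pow_congr_mod2 {a b : ℕ} (h : a % 2 = b % 2) :
    (-1 : GaussianInt)^a = (-1)^b := by
  rcases Nat.even_or_odd a with ha | ha
  · rw [ha.neg_one_pow, (Nat.even_iff.2 (by have := Nat.even_iff.1 ha; omega)).neg_one_pow]
  · rw [ha.neg_one_pow, (Nat.odd_iff.2 (by have := Nat.odd_iff.1 ha; omega)).neg_one_pow]

private lemma Tsq_even (m m' : ℕ) (h : m' ≤ m) (hm : Even m) :
    (Tval m m')^2 = 2^m := by
  apply Int.cast_injective (α := GaussianInt)
  have h4 := four_Tsq m m' h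
  have hpar : ((-1:GaussianInt))^(m-m') + (-1)^(m'+1) = 0 := by
    have hmod : (m - m') % 2 = m' % 2 := by
      have := Nat.even_iff.1 hm; omega
    rw [neg_one_pow_congr_mod2 hmod, pow_succ]
    ring
  rw [hpar, mul_zero, add_zero] at h4
  have h4' : (4:GaussianInt) * ((Tval m m' : ℤ) : GaussianInt)^2 = 4 * 2^m := by
    rw [h4, show m+2 = m+1+1 from rfl, pow_succ, pow_succ]; ring
  have := mul_left_cancel₀ (by decide : (4:GaussianInt) ≠ 0) h4'
  push_cast
  exact this

private lemma Tsq_odd (m m' : ℕ) (h : m' ≤ m) (hm : ¬ Even m) :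
    (Tval m m')^2 = 2^m * (1 + (-1)^((m - m') + (m+1)/2)) := by
  apply Int.cast_injective (α := GaussianInt)
  have h4 := four_Tsq m m' h
  have hm2 : m % 2 = 1 := by
    rcases Nat.even_or_odd m with h' | h'
    · exact absurd h' hm
    · exact Nat.odd_iff.1 h'
  have hpar : ((-1:GaussianInt))^(m'+1) = (-1)^(m-m') := by
    apply neg_one_pow_congr_mod2; omega
  have hI : Ii^(m+1) = (-1:GaussianInt)^((m+1)/2) := by
    obtain ⟨k, hk⟩ : ∃ k, m + 1 = 2*k := ⟨(m+1)/2, by omega⟩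
    have hkk : (m+1)/2 = k := by omega
    rw [hkk, hk, pow_mul, show Ii^2 = -1 from by decide]
  rw [hpar, hI] at h4
  have h4' : (4:GaussianInt) * ((Tval m m' : ℤ) : GaussianInt)^2
      = 4 * (2^m * (1 + (-1)^((m - m') + (m+1)/2))) := by
    rw [h4, pow_add ((-1:GaussianInt)) (m-m') ((m+1)/2)]
    ring
  have := mul_left_cancel₀ (by decide : (4:GaussianInt) ≠ 0) h4'
  push_cast
  exact this

private lemma sum_choose_int (m : ℕ) :
    ∑ m' ∈ range (m+1), (m.choose m' : ℤ) = 2^m := by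
  have := Nat.sum_range_choose m
  exact_mod_cast congrArg (Nat.cast : ℕ → ℤ) this

theorem sum_choose_Tval_pow_four (m : ℕ) :
    ∑ m' ∈ Finset.range (m + 1), (Nat.choose m m' : ℤ) * (Tval m m') ^ 4
      = if Even m then 2 ^ (3 * m) else 2 ^ (3 * m + 1) := by
  by_cases hm : Even m
  · rw [if_pos hm]
    have step : ∀ m' ∈ range (m+1), (Nat.choose m m' : ℤ) * (Tval m m') ^ 4
        = (m.choose m' : ℤ) * (2^(2*m)) := by
      intro m' hm'
      have hle : m' ≤ m := by simpa [Nat.lt_succ_iff] using mem_range.1 hm'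
      have h := Tsq_even m m' hle hm
      linear_combination ((m.choose m' : ℤ) * ((Tval m m')^2 + 2^m)) * h
    rw [Finset.sum_congr rfl step, ← Finset.sum_mul, sum_choose_int, ← pow_add]
    congr 1; ring
  · rw [if_neg hm]
    have hm0 : m ≠ 0 := by rintro rfl; exact hm ⟨0, rfl⟩
    have step : ∀ m' ∈ range (m+1), (Nat.choose m m' : ℤ) * (Tval m m') ^ 4
        = (m.choose m' : ℤ) * 2^(2*m+1)
            + (2^(2*m+1) * (-1)^(m + (m+1)/2)) * ((-1)^m' * (m.choose m' : ℤ)) := by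
      intro m' hm'
      have hle : m' ≤ m := by simpa [Nat.lt_succ_iff] using mem_range.1 hm'
      have hT := Tsq_odd m m' hle hm
      have h1 : ((-1:ℤ)^((m - m') + (m+1)/2))^2 = 1 := by
        rw [← pow_mul]
        exact Even.neg_one_pow ⟨(m - m') + (m+1)/2, by ring⟩
      have h2 : (-1:ℤ)^((m - m') + (m+1)/2) = (-1)^(m + (m+1)/2) * (-1)^m' := by
        have hx : (-1:ℤ)^(m - m') * (-1)^m' = (-1)^m := by
          rw [← pow_add, show (m - m') + m' = m by omega]
        have hsq : ((-1:ℤ)^m')^2 = 1 := by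
          rw [← pow_mul]
          exact Even.neg_one_pow ⟨m', by ring⟩
        rw [pow_add, pow_add]
        linear_combination ((-1:ℤ)^((m+1)/2) * (-1)^m') * hx
          + (-((-1:ℤ)^((m+1)/2) * (-1)^(m - m'))) * hsq
      linear_combination ((m.choose m' : ℤ) * ((Tval m m')^2
            + 2^m*(1 + (-1:ℤ)^((m - m') + (m+1)/2)))) * hT
        + ((m.choose m' : ℤ) * (2^m * 2^m)) * h1
        + ((m.choose m' : ℤ) * 2 * (2^m * 2^m)) * h2
    rw [Finset.sum_congr rfl step, Finset.sum_add_distrib, ← Finset.sum_mul,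
      sum_choose_int, ← Finset.mul_sum, Int.alternating_sum_range_choose, if_neg hm0,
      mul_zero, add_zero, ← pow_add]
    congr 1
    ring
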